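/- Let $d, d' \in \mathrm{Sym}_n$, and define $d \sim d'$ iff the associated tableaux $\mathrm{T}_d, \mathrm{T}_{d'}$ of type $(\alpha|\beta)$ have equal column multisets $C_j(\mathrm{T}_d) = C_j(\mathrm{T}_{d'})$ for all $j$. Then $d \sim d'$ if and only if $d' \in C_{\t_0}\, d\, \mathrm{Sym}_{\alpha|\beta}$. -/

import Mathlib

namespace SignedYoung
open Equiv Finset
open scoped Classical

abbrev Sym (n : ℕ) := Equiv.Perm (Fin n)

/-- Index of the block of the composition `γ` containing position `i` (0-based). -/
def blockOf (γ : List ℕ) (i : ℕ) : ℕ :=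
  (List.range γ.length).countP (fun j => decide ((γ.take (j + 1)).sum ≤ i))

/-- The Young subgroup of `Sym n` associated to the composition `γ`. -/
def youngSubgroup (n : ℕ) (γ : List ℕ) : Subgroup (Sym n) where
  carrier := {σ | ∀ i : Fin n, blockOf γ (σ i) = blockOf γ i}
  one_mem' := by intro i; simp
  mul_mem' := by
    intro a b ha hb i
    simp only [Equiv.Perm.mul_apply]
    rw [ha, hb]
  inv_mem' := by
    intro a ha i
    have h := ha (a⁻¹ i)
    rw [show a (a⁻¹ i) = i by simp] at h
    exact h.symm

/-- The subgroup `Sym_α` of the Young subgroup `Sym_{α|β}`: block-preserving permutations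
fixing all points `≥ |α|`. -/
def symA (n : ℕ) (α β : List ℕ) : Set (Sym n) :=
  {σ | σ ∈ youngSubgroup n (α ++ β) ∧ ∀ i : Fin n, α.sum ≤ (i : ℕ) → σ i = i}

/-- The subgroup `Sym_β^{+|α|}`: block-preserving permutations fixing all points `< |α|`. -/
def symB (n : ℕ) (α β : List ℕ) : Set (Sym n) :=
  {σ | σ ∈ youngSubgroup n (α ++ β) ∧ ∀ i : Fin n, (i : ℕ) < α.sum → σ i = i}

/-- Cells of the Young diagram of the composition `lam`. -/
abbrev Cell (lam : List ℕ) := (i : Fin lam.length) × Fin (lam.get i)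

/-- A `lam`-tableau: a bijective labelling of the cells by `1, …, n` (here `Fin n`). -/
abbrev Tab (n : ℕ) (lam : List ℕ) := Cell lam ≃ Fin n

/-- The row stabilizer of a tableau. -/
def rowStab {n : ℕ} {lam : List ℕ} (t : Tab n lam) : Set (Sym n) :=
  {σ | ∀ a : Fin n, (t.symm (σ a)).1 = (t.symm a).1}

/-- The column stabilizer of a tableau. -/
def colStab {n : ℕ} {lam : List ℕ} (t : Tab n lam) : Set (Sym n) :=
  {σ | ∀ a : Fin n, ((t.symm (σ a)).2 : ℕ) = ((t.symm a).2 : ℕ)}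

/-- Colours `c_1 < c_2 < ⋯ < d_1 < d_2 < ⋯` (0-based). -/
abbrev Colour := Lex (ℕ ⊕ ℕ)

def cCol (k : ℕ) : Colour := toLex (Sum.inl k)

def dCol (k : ℕ) : Colour := toLex (Sum.inr k)

/-- `T` is a `lam`-tableau of type `(α|β)`: exactly `α_k` cells of colour `c_k` and
`β_k` of colour `d_k`. -/
def HasType {lam : List ℕ} (α β : List ℕ) (T : Cell lam → Colour) : Prop :=
  (∀ k : ℕ, (Finset.univ.filter fun c => T c = cCol k).card = α.getD k 0) ∧
  (∀ k : ℕ, (Finset.univ.filter fun c => T c = dCol k).card = β.getD k 0)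

/-- The colour of the number `i` under the canonical colouring by `(α|β)`. -/
def colourOfIdx (α β : List ℕ) (i : ℕ) : Colour :=
  if blockOf (α ++ β) i < α.length then cCol (blockOf (α ++ β) i)
  else dCol (blockOf (α ++ β) i - α.length)

/-- The canonical `lam`-tableau of type `(α|β)` associated to the tableau `t0`. -/
def canonT {n : ℕ} {lam : List ℕ} (t0 : Tab n lam) (α β : List ℕ) : Cell lam → Colour :=
  fun c => colourOfIdx α β (t0 c)

/-- The action `σ · T = T ∘ t0⁻¹ ∘ σ⁻¹ ∘ t0` of `Sym n` on tableaux of type `(α|β)`,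
through the fixed tableau `t0`. -/
def actT {n : ℕ} {lam : List ℕ} (t0 : Tab n lam) (σ : Sym n) (T : Cell lam → Colour) :
    Cell lam → Colour :=
  fun c => T (t0.symm (σ⁻¹ (t0 c)))

/-- `T_d = d · T_0`. -/
def TOf {n : ℕ} {lam : List ℕ} (t0 : Tab n lam) (α β : List ℕ) (d : Sym n) :
    Cell lam → Colour :=
  actT t0 d (canonT t0 α β)

def RowSemistd {lam : List ℕ} (T : Cell lam → Colour) : Prop :=
  ∀ c c' : Cell lam, c.1 = c'.1 → (c.2 : ℕ) < (c'.2 : ℕ) → T c ≤ T c'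

def ColSemistd {lam : List ℕ} (T : Cell lam → Colour) : Prop :=
  ∀ c c' : Cell lam, (c.2 : ℕ) = (c'.2 : ℕ) → c.1 < c'.1 → T c ≤ T c'

/-- Repeats in a row occur only for colours `c_k`. -/
def RowRepeatC {lam : List ℕ} (T : Cell lam → Colour) : Prop :=
  ∀ c c' : Cell lam, c.1 = c'.1 → (c.2 : ℕ) ≠ (c'.2 : ℕ) → T c = T c' → ∃ k, T c = cCol k

/-- Repeats in a column occur only for colours `d_k`. -/
def ColRepeatD {lam : List ℕ} (T : Cell lam → Colour) : Prop :=
  ∀ c c' : Cell lam, (c.2 : ℕ) = (c'.2 : ℕ) → c.1 ≠ c'.1 → T c = T c' → ∃ k, T c = dCol k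

def IsSemistd {lam : List ℕ} (T : Cell lam → Colour) : Prop :=
  RowSemistd T ∧ ColSemistd T ∧ RowRepeatC T ∧ ColRepeatD T

/-- A standard tableau: strictly increasing along rows and down columns. -/
def IsStd {n : ℕ} {lam : List ℕ} (t : Tab n lam) : Prop :=
  (∀ c c' : Cell lam, c.1 = c'.1 → (c.2 : ℕ) < (c'.2 : ℕ) → t c < t c') ∧
  (∀ c c' : Cell lam, (c.2 : ℕ) = (c'.2 : ℕ) → c.1 < c'.1 → t c < t c')

def IsPartition (n : ℕ) (lam : List ℕ) : Prop :=
  lam.Pairwise (· ≥ ·) ∧ (∀ x ∈ lam, 0 < x) ∧ lam.sum = n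

def IsBicomp (n : ℕ) (α β : List ℕ) : Prop :=
  (∀ x ∈ α, 0 < x) ∧ (∀ x ∈ β, 0 < x) ∧ α.sum + β.sum = n

/-- `𝒮 = {d : d⁻¹ R_{t0} d ∩ Sym_{α|β} ⊆ Sym_α}`. -/
def RSet {n : ℕ} {lam : List ℕ} (t0 : Tab n lam) (α β : List ℕ) : Set (Sym n) :=
  {d | ∀ σ ∈ rowStab t0, d⁻¹ * σ * d ∈ youngSubgroup n (α ++ β) →
    d⁻¹ * σ * d ∈ symA n α β}

/-- `𝒞 = {d : d⁻¹ C_{t0} d ∩ Sym_{α|β} ⊆ Sym_β^{+|α|}}`. -/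
def CSet {n : ℕ} {lam : List ℕ} (t0 : Tab n lam) (α β : List ℕ) : Set (Sym n) :=
  {d | ∀ σ ∈ colStab t0, d⁻¹ * σ * d ∈ youngSubgroup n (α ++ β) →
    d⁻¹ * σ * d ∈ symB n α β}

/-- The double coset `R_{t0} x Sym_{α|β}`. -/
def dCoset {n : ℕ} {lam : List ℕ} (t0 : Tab n lam) (α β : List ℕ) (x : Sym n) :
    Set (Sym n) :=
  {ω | ∃ τ ∈ rowStab t0, ∃ ξ ∈ youngSubgroup n (α ++ β), ω = τ * x * ξ}

/-- The double coset `C_{t0} x Sym_{α|β}`. -/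
def cCoset {n : ℕ} {lam : List ℕ} (t0 : Tab n lam) (α β : List ℕ) (x : Sym n) :
    Set (Sym n) :=
  {ω | ∃ σ ∈ colStab t0, ∃ ξ ∈ youngSubgroup n (α ++ β), ω = σ * x * ξ}

/-- `ε` is the sign function `ε_𝔡` on the double coset `R_{t0} 𝔡 Sym_{α|β}`:
`ε(τ 𝔡 ξ_α ξ_β^{+|α|}) = sgn ξ_β`. -/
def IsEps {n : ℕ} {lam : List ℕ} (t0 : Tab n lam) (α β : List ℕ) (𝔡 : Sym n)
    (ε : Sym n → ℤ) : Prop :=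
  ∀ τ ∈ rowStab t0, ∀ ξa ∈ symA n α β, ∀ ξb ∈ symB n α β,
    ε (τ * 𝔡 * (ξa * ξb)) = (Equiv.Perm.sign ξb : ℤ)

/-- The coefficient `𝔞_{d,𝔡} = ∑_{σ ∈ C_{t0}, σd ∈ R_{t0} 𝔡 Sym_{α|β}} sgn(σ) ε_𝔡(σ d)`. -/
noncomputable def coeffA {n : ℕ} {lam : List ℕ} (t0 : Tab n lam) (α β : List ℕ)
    (ε : Sym n → ℤ) (d 𝔡 : Sym n) : ℤ :=
  ∑ σ : Sym n, if σ ∈ colStab t0 ∧ σ * d ∈ dCoset t0 α β 𝔡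
    then (Equiv.Perm.sign σ : ℤ) * ε (σ * d) else 0

/-- The multiset of colours in column `j` of `T`. -/
def colMul {lam : List ℕ} (T : Cell lam → Colour) (j : ℕ) : Multiset Colour :=
  (Finset.univ.filter fun c : Cell lam => (c.2 : ℕ) = j).val.map T

noncomputable def sortedCol (m : Multiset Colour) : List Colour := m.sort (· ≤ ·)

/-- Comparison of column multisets: the sorted lists agree up to position `k`, where
the first is larger. -/
def msGT (m m' : Multiset Colour) : Prop :=
  ∃ k, (∀ s, s < k → (sortedCol m).getD s (cCol 0) = (sortedCol m').getD s (cCol 0)) ∧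
    (sortedCol m').getD k (cCol 0) < (sortedCol m).getD k (cCol 0)

/-- The strict column-dominance order `T ⊳ T'`. -/
def TabGT {lam : List ℕ} (T T' : Cell lam → Colour) : Prop :=
  ∃ t, (∀ j, j < t → colMul T j = colMul T' j) ∧ msGT (colMul T t) (colMul T' t)

/-- The column-dominance pre-order `T ⊵ T'`. -/
def TabGE {lam : List ℕ} (T T' : Cell lam → Colour) : Prop :=
  (∀ j, colMul T j = colMul T' j) ∨ TabGT T T'



section Helpers
variable {n : ℕ} {lam α β : List ℕ}

lemma exists_equiv_of_fiber_card {A B : Type*} [Fintype A]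
    (F G : A → B) (h : ∀ b, Nat.card {a // F a = b} = Nat.card {a // G a = b}) :
    ∃ e : A ≃ A, ∀ a, G (e a) = F a := by
  classical
  let e' := fun b => Fintype.equivOfCardEq (α := {a // F a = b}) (β := {a // G a = b})
    (by rw [← Nat.card_eq_fintype_card, ← Nat.card_eq_fintype_card]; exact h b)
  refine ⟨(Equiv.sigmaFiberEquiv F).symm.trans
    ((Equiv.sigmaCongrRight e').trans (Equiv.sigmaFiberEquiv G)), fun a => ?_⟩
  exact ((e' (F a)) ⟨a, rfl⟩).2

lemma TOf_apply (t0 : Tab n lam) (d : Sym n) (c : Cell lam) :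
    TOf t0 α β d c = colourOfIdx α β (d⁻¹ (t0 c)) := by
  simp [TOf, actT, canonT]

lemma colourOfIdx_young {ξ : Sym n} (hξ : ξ ∈ youngSubgroup n (α ++ β)) (i : Fin n) :
    colourOfIdx α β (ξ i) = colourOfIdx α β (i : ℕ) := by
  unfold colourOfIdx
  rw [hξ i]

lemma blockOf_eq_of_colour {i i' : ℕ}
    (h : colourOfIdx α β i = colourOfIdx α β i') :
    blockOf (α ++ β) i = blockOf (α ++ β) i' := by
  unfold colourOfIdx at h
  by_cases h1 : blockOf (α ++ β) i < α.length <;>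
    by_cases h2 : blockOf (α ++ β) i' < α.length <;>
    simp [h1, h2, cCol, dCol] at h
  · exact h
  · omega

lemma card_fiber_eq_count (T : Cell lam → Colour) (j : ℕ) (γ : Colour) :
    Nat.card {c : Cell lam // ((c.2 : ℕ), T c) = (j, γ)} =
      Multiset.count γ (colMul T j) := by
  classical
  rw [Nat.card_eq_fintype_card, Fintype.card_subtype]
  unfold colMul
  rw [Multiset.count_map]
  rw [← Finset.filter_val, Finset.filter_filter]
  congr 1
  apply Finset.filter_congr
  intro c _
  constructor
  · rintro h
    rw [Prod.mk.injEq] at h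
    exact ⟨h.1, h.2.symm⟩
  · rintro ⟨h1, h2⟩
    rw [Prod.mk.injEq]
    exact ⟨h1, h2.symm⟩

lemma colMul_comp_equiv (T : Cell lam → Colour) (e : Cell lam ≃ Cell lam)
    (he : ∀ c : Cell lam, ((e c).2 : ℕ) = (c.2 : ℕ)) (j : ℕ) :
    colMul (fun c => T (e c)) j = colMul T j := by
  classical
  unfold colMul
  have himg : (Finset.univ.filter fun c : Cell lam => ((c.2 : ℕ) = j)).image e =
      Finset.univ.filter fun c : Cell lam => ((c.2 : ℕ) = j) := by
    ext x
    simp only [Finset.mem_image, Finset.mem_filter, Finset.mem_univ, true_and]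
    constructor
    · rintro ⟨c, hc, rfl⟩
      rw [he c]; exact hc
    · intro hx
      refine ⟨e.symm x, ?_, e.apply_symm_apply x⟩
      have := he (e.symm x)
      rw [e.apply_symm_apply] at this
      rw [← this]; exact hx
  calc (Finset.univ.filter fun c : Cell lam => ((c.2 : ℕ) = j)).val.map (fun c => T (e c))
      = ((Finset.univ.filter fun c : Cell lam => ((c.2 : ℕ) = j)).val.map e).map T := by
        rw [Multiset.map_map]; rfl
    _ = ((Finset.univ.filter fun c : Cell lam => ((c.2 : ℕ) = j)).image e).val.map T := by
        rw [Finset.image_val_of_injOn (e.injective.injOn)]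
    _ = _ := by rw [himg]

end Helpers

/-- **Column-equivalence and double cosets (Lemma 4.2(i)).** `d ∼ d'` (i.e. `T_d` and
`T_{d'}` have the same column multisets) if and only if `d' ∈ C_{t0} d Sym_{α|β}`. -/
theorem tab_sim_iff_mem_cCoset (n : ℕ) (lam : List ℕ) (hl : IsPartition n lam)
    (α β : List ℕ) (hab : IsBicomp n α β) (t0 : Tab n lam) (d d' : Sym n) :
    (∀ j, colMul (TOf t0 α β d) j = colMul (TOf t0 α β d') j) ↔
      d' ∈ cCoset t0 α β d := by
  constructor
  · -- forward direction
    intro hcol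
    classical
    have hfib : ∀ p : ℕ × Colour,
        Nat.card {c : Cell lam // ((c.2 : ℕ), TOf t0 α β d c) = p} =
          Nat.card {c : Cell lam // ((c.2 : ℕ), TOf t0 α β d' c) = p} := by
      rintro ⟨j, γ⟩
      rw [card_fiber_eq_count, card_fiber_eq_count, hcol j]
    obtain ⟨e, he⟩ := exists_equiv_of_fiber_card
      (fun c : Cell lam => ((c.2 : ℕ), TOf t0 α β d c))
      (fun c : Cell lam => ((c.2 : ℕ), TOf t0 α β d' c)) hfib
    have hcolpres : ∀ c : Cell lam, ((e c).2 : ℕ) = (c.2 : ℕ) := by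
      intro c
      exact (Prod.ext_iff.mp (he c)).1
    have hTeq : ∀ c : Cell lam, TOf t0 α β d' (e c) = TOf t0 α β d c := by
      intro c
      exact (Prod.ext_iff.mp (he c)).2
    refine ⟨(t0.symm.trans e).trans t0, ?_, d⁻¹ * ((t0.symm.trans e).trans t0)⁻¹ * d', ?_, ?_⟩
    · intro a
      show ((t0.symm (t0 (e (t0.symm a)))).2 : ℕ) = _
      rw [t0.symm_apply_apply]
      exact hcolpres (t0.symm a)
    · intro i
      apply blockOf_eq_of_colour (α := α) (β := β)
      have hinvapp : (((t0.symm.trans e).trans t0)⁻¹ : Sym n) (d' i) =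
          t0 (e.symm (t0.symm (d' i))) := rfl
      have h1 : colourOfIdx α β ((d⁻¹ * ((t0.symm.trans e).trans t0)⁻¹ * d' : Sym n) i : ℕ) =
          TOf t0 α β d' (t0.symm (d' i)) := by
        have hstep : ((d⁻¹ * ((t0.symm.trans e).trans t0)⁻¹ * d' : Sym n) i : Fin n) =
            d⁻¹ (t0 (e.symm (t0.symm (d' i)))) := by
          rw [Equiv.Perm.mul_apply, Equiv.Perm.mul_apply, hinvapp]
        rw [hstep]
        have h2 : TOf t0 α β d (e.symm (t0.symm (d' i))) = TOf t0 α β d' (t0.symm (d' i)) := by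
          have h4 := hTeq (e.symm (t0.symm (d' i)))
          rw [e.apply_symm_apply] at h4
          exact h4.symm
        rw [← h2, TOf_apply]
      have h3 : colourOfIdx α β ((i : Fin n) : ℕ) = TOf t0 α β d' (t0.symm (d' i)) := by
        rw [TOf_apply, t0.apply_symm_apply, Equiv.Perm.coe_inv, Equiv.symm_apply_apply]
      rw [h1, h3]
    · group
  · -- backward direction
    rintro ⟨σ, hσ, ξ, hξ, rfl⟩ j
    classical
    have hecol : ∀ c : Cell lam, (((((t0.trans (σ⁻¹ : Sym n)).trans t0.symm) : Cell lam ≃ Cell lam) c).2 : ℕ) = (c.2 : ℕ) := by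
      intro c
      have := hσ (σ⁻¹ (t0 c))
      rw [Equiv.Perm.coe_inv, Equiv.apply_symm_apply, t0.symm_apply_apply] at this
      exact this.symm
    have hTeq : ∀ c : Cell lam, TOf t0 α β (σ * d * ξ) c =
        TOf t0 α β d (((t0.trans (σ⁻¹ : Sym n)).trans t0.symm) c) := by
      intro c
      rw [TOf_apply, TOf_apply]
      show colourOfIdx α β (((σ * d * ξ)⁻¹ : Sym n) (t0 c) : ℕ) =
        colourOfIdx α β ((d⁻¹ : Sym n) (t0 (t0.symm (σ⁻¹ (t0 c)))) : ℕ)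
      rw [t0.apply_symm_apply]
      have hinv : ((σ * d * ξ)⁻¹ : Sym n) (t0 c) = ξ⁻¹ (d⁻¹ (σ⁻¹ (t0 c))) := by
        rw [show ((σ * d * ξ)⁻¹ : Sym n) = ξ⁻¹ * d⁻¹ * σ⁻¹ by group]
        rfl
      rw [hinv]
      exact colourOfIdx_young (Subgroup.inv_mem _ hξ) _
    symm
    calc colMul (TOf t0 α β (σ * d * ξ)) j
        = colMul (fun c => TOf t0 α β d (((t0.trans (σ⁻¹ : Sym n)).trans t0.symm) c)) j := by
          unfold colMul; congr 1; exact funext hTeq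
      _ = colMul (TOf t0 α β d) j :=
          colMul_comp_equiv _ _ hecol j

end SignedYoung
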